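/- Let ψ₀, B, C, D ∈ ℂ with ψ₀ ≠ 0, and set ψ(z) = ψ₀·e^{Cz² + Dz} and φ(z) = z + B. If |ψ(u)/ψ(z)| · e^{Re(conj(z)·φ(u)) − |u|²/2 − |φ(z)|²/2} ≤ 1 for all u, z ∈ ℂ, then C = 0 and |D| ≤ |B|. -/

import Mathlib

open Complex ComplexConjugate

theorem cohypo_key_step (ψ₀ B C D : ℂ) (hψ₀ : ψ₀ ≠ 0)
    (ψ : ℂ → ℂ) (hψ : ∀ z : ℂ, ψ z = ψ₀ * Complex.exp (C * z ^ 2 + D * z))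
    (φ : ℂ → ℂ) (hφ : ∀ z : ℂ, φ z = z + B)
    (hineq : ∀ u z : ℂ, ‖ψ u / ψ z‖ *
        Real.exp ((conj z * φ u).re - (‖u‖) ^ 2 / 2
          - (‖φ z‖) ^ 2 / 2) ≤ 1) :
    C = 0 ∧ ‖D‖ ≤ ‖B‖ := by
  have key : ∀ z w : ℂ, (2*C*z*w + C*w^2 + D*w).re
      ≤ (‖w‖)^2/2 + (‖B‖)^2/2 := by
    intro z w
    have h := hineq (z + w) z
    rw [hψ, hψ, hφ, hφ, mul_div_mul_left _ _ hψ₀, ← Complex.exp_sub,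
      Complex.norm_exp, ← Real.exp_add, Real.exp_le_one_iff] at h
    rw [Complex.sq_norm, Complex.sq_norm] at h
    rw [Complex.sq_norm, Complex.sq_norm]
    simp only [Complex.sub_re, Complex.add_re, Complex.mul_re, Complex.mul_im,
      Complex.add_im, Complex.conj_re, Complex.conj_im, Complex.normSq_apply,
      Complex.re_ofNat, Complex.im_ofNat, pow_two] at h ⊢
    nlinarith [h]
  have hC : C = 0 := by
    by_contra hC
    have hCpos : 0 < Complex.normSq C := Complex.normSq_pos.mpr hC
    set M : ℝ := 1/2 + (‖B‖)^2/2 with hM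
    set t : ℝ := (M + 1 - (C+D).re) / (2 * Complex.normSq C) with ht
    have h := key ((t:ℂ) * conj C) 1
    have hre : (2*C*((t:ℂ) * conj C)*1 + C*1^2 + D*1).re
        = 2*t*Complex.normSq C + (C+D).re := by
      simp [Complex.mul_re, Complex.mul_im, Complex.normSq_apply, Complex.add_re]
      ring
    rw [hre] at h
    simp only [norm_one, one_pow] at h
    have h2 : 2*t*Complex.normSq C = M + 1 - (C+D).re := by
      rw [ht]; field_simp
    rw [h2] at h
    rw [hM] at h
    linarith
  refine ⟨hC, ?_⟩
  have h := key 0 (conj D)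
  rw [hC] at h
  simp only [mul_zero, zero_mul, zero_add, zero_mul, add_zero] at h
  have hDD : (D * conj D).re = (‖D‖)^2 := by
    rw [Complex.mul_conj, Complex.normSq_eq_norm_sq]
    exact Complex.ofReal_re _
  rw [hDD, Complex.norm_conj] at h
  nlinarith [norm_nonneg D, norm_nonneg B]
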